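/- A three-point metric space ({ζ₁,ζ₂,ζ₃}, δ) with all distances in (0,1) admits an isometric embedding into the open unit disk equipped with the pseudohyperbolic metric ρ if and only if its distances satisfy the strengthened triangle inequality |δ(ζ_i,ζ_j) - δ(ζ_j,ζ_k)|/(1 - δ(ζ_i,ζ_j)δ(ζ_j,ζ_k)) ≤ δ(ζ_i,ζ_k) ≤ (δ(ζ_i,ζ_j)+δ(ζ_j,ζ_k))/(1+δ(ζ_i,ζ_j)δ(ζ_j,ζ_k)) for all permutations (i,j,k) of (1,2,3). -/

import Mathlib

/-- The pseudohyperbolic metric on the open unit disk. -/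
noncomputable def pseudoHyp (z w : ℂ) : ℝ :=
  ‖(z - w) / (1 - (starRingEnd ℂ) w * z)‖

open Complex


lemma denom_ne_zero {z w : ℂ} (hz : ‖z‖ < 1) (hw : ‖w‖ < 1) :
    1 - (starRingEnd ℂ) w * z ≠ 0 := by
  intro h
  have h1 : (starRingEnd ℂ) w * z = 1 := by linear_combination -h
  have h2 : ‖(starRingEnd ℂ) w * z‖ = 1 := by rw [h1]; simp
  rw [norm_mul, Complex.norm_conj] at h2
  nlinarith [norm_nonneg z, norm_nonneg w]

lemma pseudoHyp_self (z : ℂ) : pseudoHyp z z = 0 := by simp [pseudoHyp]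

lemma pseudoHyp_comm (z w : ℂ) : pseudoHyp z w = pseudoHyp w z := by
  unfold pseudoHyp
  rw [norm_div, norm_div]
  rw [show ‖1 - (starRingEnd ℂ) w * z‖ = ‖1 - (starRingEnd ℂ) z * w‖ by
    rw [← Complex.norm_conj (1 - (starRingEnd ℂ) z * w)]; congr 1
    simp only [map_sub, map_mul, Complex.conj_conj, map_one]; ring]
  rw [show ‖z - w‖ = ‖w - z‖ from norm_sub_rev z w]

lemma normSq_den (z w : ℂ) : Complex.normSq (1 - (starRingEnd ℂ) w * z)
    = 1 + Complex.normSq z * Complex.normSq w - 2 * (z * (starRingEnd ℂ) w).re := by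
  rw [Complex.normSq_sub]
  simp only [map_mul, Complex.conj_conj, Complex.normSq_one, Complex.normSq_mul,
    Complex.normSq_conj, one_mul]
  simp [Complex.mul_re, Complex.conj_re, Complex.conj_im]
  ring

lemma re_abs_bound (z w : ℂ) : |(z * (starRingEnd ℂ) w).re| ≤ ‖z‖ * ‖w‖ := by
  calc |(z * (starRingEnd ℂ) w).re| ≤ ‖z * (starRingEnd ℂ) w‖ := Complex.abs_re_le_norm _
  _ = ‖z‖ * ‖w‖ := by rw [norm_mul, Complex.norm_conj]

lemma pseudoHyp_lt_one {z w : ℂ} (hz : ‖z‖ < 1) (hw : ‖w‖ < 1) :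
    pseudoHyp z w < 1 := by
  have hden := denom_ne_zero hz hw
  have hB : 0 < ‖1 - (starRingEnd ℂ) w * z‖ := (norm_pos_iff.mpr hden)
  unfold pseudoHyp
  rw [norm_div, div_lt_one hB]
  have h2 : (‖z - w‖)^2 < (‖1 - (starRingEnd ℂ) w * z‖)^2 := by
    rw [Complex.sq_norm, Complex.sq_norm, Complex.normSq_sub, normSq_den]
    have e1 : Complex.normSq z = (‖z‖)^2 := (Complex.sq_norm z).symm
    have e2 : Complex.normSq w = (‖w‖)^2 := (Complex.sq_norm w).symm
    have hz2 : Complex.normSq z < 1 := by rw [e1]; nlinarith [norm_nonneg z]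
    have hw2 : Complex.normSq w < 1 := by rw [e2]; nlinarith [norm_nonneg w]
    nlinarith [Complex.normSq_nonneg z, Complex.normSq_nonneg w]
  exact lt_of_pow_lt_pow_left₀ 2 hB.le h2

lemma base_sti {z w : ℂ} (hz : ‖z‖ < 1) (hw : ‖w‖ < 1) :
    |‖z‖ - ‖w‖| / (1 - ‖z‖ * ‖w‖) ≤ pseudoHyp z w ∧
      pseudoHyp z w ≤ (‖z‖ + ‖w‖) / (1 + ‖z‖ * ‖w‖) := by
  set r := ‖z‖ with hr
  set s := ‖w‖ with hs
  have hr0 : 0 ≤ r := norm_nonneg z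
  have hs0 : 0 ≤ s := norm_nonneg w
  set A := ‖z - w‖ with hA
  set B := ‖1 - (starRingEnd ℂ) w * z‖ with hB
  have hA0 : 0 ≤ A := norm_nonneg _
  have hBpos : 0 < B := (norm_pos_iff.mpr (denom_ne_zero hz hw))
  set t := (z * (starRingEnd ℂ) w).re with ht
  have htb : |t| ≤ r * s := re_abs_bound z w
  have htb1 : t ≤ r * s := le_trans (le_abs_self t) htb
  have htb2 : -(r*s) ≤ t := neg_le_of_abs_le htb
  have e1 : Complex.normSq z = r^2 := by rw [hr, Complex.sq_norm]
  have e2 : Complex.normSq w = s^2 := by rw [hs, Complex.sq_norm]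
  have hA2 : A^2 = r^2 + s^2 - 2*t := by
    rw [hA, Complex.sq_norm, Complex.normSq_sub, e1, e2]
  have hB2 : B^2 = 1 + r^2*s^2 - 2*t := by
    rw [hB, Complex.sq_norm, normSq_den, e1, e2]
  have hph : pseudoHyp z w = A / B := by rw [pseudoHyp, norm_div]
  clear_value r s A B t
  clear hr hs hA hB ht e1 e2
  have hprod : (0:ℝ) ≤ (1 - r^2) * (1 - s^2) :=
    mul_nonneg (by nlinarith) (by nlinarith)
  have hrs1 : r * s < 1 := by nlinarith
  constructor
  · rw [hph, div_le_div_iff₀ (by linarith) hBpos]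
    have hsq : (|r - s| * B)^2 ≤ (A * (1 - r*s))^2 := by
      have : |r-s|^2 = (r-s)^2 := sq_abs _
      nlinarith [mul_nonneg (by linarith : (0:ℝ) ≤ r*s - t)
        (by nlinarith [hprod] : (0:ℝ) ≤ (1-r*s)^2 - (r-s)^2)]
    have h1 : 0 ≤ A * (1 - r*s) := mul_nonneg hA0 (by linarith)
    have h2 : 0 ≤ |r-s| * B := mul_nonneg (abs_nonneg _) hBpos.le
    have := Real.sqrt_le_sqrt hsq
    rwa [Real.sqrt_sq h2, Real.sqrt_sq h1] at this
  · rw [hph, div_le_div_iff₀ hBpos (by nlinarith)]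
    have hsq : (A * (1 + r*s))^2 ≤ ((r + s) * B)^2 := by
      nlinarith [mul_nonneg (by linarith : (0:ℝ) ≤ t + r*s)
        (by nlinarith [hprod] : (0:ℝ) ≤ (1+r*s)^2 - (r+s)^2)]
    have h1 : 0 ≤ (r+s) * B := mul_nonneg (by linarith) hBpos.le
    have h2 : 0 ≤ A * (1 + r*s) := mul_nonneg hA0 (by nlinarith)
    have := Real.sqrt_le_sqrt hsq
    rwa [Real.sqrt_sq h2, Real.sqrt_sq h1] at this

lemma pseudoHyp_mobius {z w v : ℂ} (hz : ‖z‖ < 1) (hw : ‖w‖ < 1)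
    (hv : ‖v‖ < 1) :
    pseudoHyp ((z - v) / (1 - (starRingEnd ℂ) v * z)) ((w - v) / (1 - (starRingEnd ℂ) v * w))
      = pseudoHyp z w := by
  have hd1 : (1 - (starRingEnd ℂ) v * z) ≠ 0 := denom_ne_zero hz hv
  have hd2 : (1 - (starRingEnd ℂ) v * w) ≠ 0 := denom_ne_zero hw hv
  have hdzw : (1 - (starRingEnd ℂ) w * z) ≠ 0 := denom_ne_zero hz hw
  have he : (1 - (starRingEnd ℂ) v * v) ≠ 0 := denom_ne_zero hv hv
  have hd3eq : (1 - v * (starRingEnd ℂ) w) = (starRingEnd ℂ) (1 - (starRingEnd ℂ) v * w) := by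
    simp only [map_sub, map_mul, Complex.conj_conj, map_one]
  have hd3 : (1 - v * (starRingEnd ℂ) w) ≠ 0 := by
    rw [hd3eq]
    intro h
    exact hd2 (by simpa using congrArg (starRingEnd ℂ) h)
  have hnum : (z - v) / (1 - (starRingEnd ℂ) v * z) - (w - v) / (1 - (starRingEnd ℂ) v * w)
      = ((z - w) * (1 - (starRingEnd ℂ) v * v))
        / ((1 - (starRingEnd ℂ) v * z) * (1 - (starRingEnd ℂ) v * w)) := by
    rw [div_sub_div _ _ hd1 hd2]
    ring
  have hden : 1 - (starRingEnd ℂ) ((w - v) / (1 - (starRingEnd ℂ) v * w))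
        * ((z - v) / (1 - (starRingEnd ℂ) v * z))
      = ((1 - (starRingEnd ℂ) v * v) * (1 - (starRingEnd ℂ) w * z))
        / ((1 - v * (starRingEnd ℂ) w) * (1 - (starRingEnd ℂ) v * z)) := by
    rw [map_div₀]
    simp only [map_sub, map_mul, Complex.conj_conj, map_one]
    rw [div_mul_div_comm, eq_div_iff (mul_ne_zero hd3 hd1), sub_mul,
      div_mul_cancel₀ _ (mul_ne_zero hd3 hd1)]
    ring
  rw [pseudoHyp, hnum, hden]
  have hsimp : ((z - w) * (1 - (starRingEnd ℂ) v * v))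
        / ((1 - (starRingEnd ℂ) v * z) * (1 - (starRingEnd ℂ) v * w))
      / (((1 - (starRingEnd ℂ) v * v) * (1 - (starRingEnd ℂ) w * z))
        / ((1 - v * (starRingEnd ℂ) w) * (1 - (starRingEnd ℂ) v * z)))
      = ((z - w) * (1 - v * (starRingEnd ℂ) w))
        / ((1 - (starRingEnd ℂ) w * z) * (1 - (starRingEnd ℂ) v * w)) := by
    rw [div_div_div_eq, div_eq_div_iff (mul_ne_zero (mul_ne_zero hd1 hd2) (mul_ne_zero he hdzw))
      (mul_ne_zero hdzw hd2)]
    ring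
  rw [hsimp, pseudoHyp, norm_div, norm_div, norm_mul, norm_mul]
  rw [show ‖1 - v * (starRingEnd ℂ) w‖ = ‖1 - (starRingEnd ℂ) v * w‖ by
    rw [hd3eq, Complex.norm_conj]]
  rw [mul_div_mul_comm, div_self (norm_ne_zero_iff.mpr hd2), mul_one]

lemma pseudoHyp_sti {z v w : ℂ} (hz : ‖z‖ < 1) (hv : ‖v‖ < 1)
    (hw : ‖w‖ < 1) :
    |pseudoHyp z v - pseudoHyp v w| / (1 - pseudoHyp z v * pseudoHyp v w) ≤ pseudoHyp z w ∧
      pseudoHyp z w ≤ (pseudoHyp z v + pseudoHyp v w) / (1 + pseudoHyp z v * pseudoHyp v w) := by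
  set z' := (z - v) / (1 - (starRingEnd ℂ) v * z) with hz'
  set w' := (w - v) / (1 - (starRingEnd ℂ) v * w) with hw'
  have haz : ‖z'‖ = pseudoHyp z v := rfl
  have haw : ‖w'‖ = pseudoHyp v w := by
    rw [hw', pseudoHyp_comm v w]; rfl
  have hz'1 : ‖z'‖ < 1 := by rw [haz]; exact pseudoHyp_lt_one hz hv
  have hw'1 : ‖w'‖ < 1 := by rw [haw]; exact pseudoHyp_lt_one hv hw
  have := base_sti hz'1 hw'1
  rwa [haz, haw, pseudoHyp_mobius hz hw hv] at this

set_option maxHeartbeats 2000000 in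
/-- A three-point metric space with distances in `(0,1)` embeds isometrically into the
open unit disk with the pseudohyperbolic metric iff its distances satisfy the
strengthened triangle inequality for all permutations of the points. -/
theorem three_point_embeds_iff_sti (δ : Fin 3 → Fin 3 → ℝ)
    (hzero : ∀ i, δ i i = 0)
    (hsymm : ∀ i j, δ i j = δ j i)
    (hpos : ∀ i j, i ≠ j → 0 < δ i j ∧ δ i j < 1)
    (htri : ∀ i j k, δ i k ≤ δ i j + δ j k) :
    (∃ Φ : Fin 3 → ℂ, (∀ i, ‖Φ i‖ < 1) ∧ ∀ i j, pseudoHyp (Φ i) (Φ j) = δ i j) ↔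
      (∀ i j k : Fin 3, i ≠ j → j ≠ k → i ≠ k →
        |δ i j - δ j k| / (1 - δ i j * δ j k) ≤ δ i k ∧
          δ i k ≤ (δ i j + δ j k) / (1 + δ i j * δ j k)) := by
  constructor
  · rintro ⟨Φ, hΦ1, hΦ2⟩ i j k _ _ _
    have h0 : ∀ l, ‖Φ l‖ < 1 := fun l => by
      exact hΦ1 l
    rw [← hΦ2 i j, ← hΦ2 j k, ← hΦ2 i k]
    exact pseudoHyp_sti (h0 i) (h0 j) (h0 k)
  · intro hSTI
    obtain ⟨ha0, ha1⟩ := hpos 0 1 (by decide)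
    obtain ⟨hb0, hb1⟩ := hpos 1 2 (by decide)
    obtain ⟨hc0, hc1⟩ := hpos 0 2 (by decide)
    obtain ⟨hL, hR⟩ := hSTI 0 1 2 (by decide) (by decide) (by decide)
    set a := δ 0 1 with hadef
    set b := δ 1 2 with hbdef
    set c := δ 0 2 with hcdef
    have hab : a * b < 1 := by nlinarith
    have hL' : |a - b| ≤ c * (1 - a * b) := by
      rw [div_le_iff₀ (by linarith)] at hL; exact hL
    have hR' : c * (1 + a * b) ≤ a + b := by
      rw [le_div_iff₀ (by nlinarith)] at hR; exact hR
    have hsqL : (a - b)^2 ≤ c^2 * (1 - a*b)^2 := by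
      have h1 : |a-b|^2 = (a-b)^2 := sq_abs _
      nlinarith [abs_nonneg (a-b), mul_nonneg hc0.le (by linarith : (0:ℝ) ≤ 1 - a*b)]
    have hsqR : c^2 * (1 + a*b)^2 ≤ (a + b)^2 := by
      nlinarith [mul_nonneg hc0.le (by nlinarith : (0:ℝ) ≤ 1 + a*b)]
    have hdneg : 2*a*b*(c^2-1) < 0 := by
      nlinarith [mul_pos ha0 hb0, mul_pos (mul_pos ha0 hb0) (show (0:ℝ) < 1 - c^2 by nlinarith)]
    set u : ℝ := (c^2*(1+a^2*b^2)-a^2-b^2)/(2*a*b*(c^2-1)) with hudef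
    have hu : 2*a*b*(c^2-1)*u = c^2*(1+a^2*b^2)-a^2-b^2 := by
      rw [hudef, mul_comm, div_mul_eq_mul_div, mul_div_assoc, div_self hdneg.ne, mul_one]
    clear_value u
    clear hudef
    have hu1 : u ≤ 1 := by nlinarith [hu, hsqL, hdneg]
    have hu2 : -1 ≤ u := by nlinarith [hu, hsqR, hdneg]
    set s : ℝ := Real.sqrt (1 - u^2) with hsdef
    have hu02 : 0 ≤ 1 - u^2 := by
      linarith [mul_nonneg (by linarith : (0:ℝ) ≤ 1-u) (by linarith : (0:ℝ) ≤ 1+u)]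
    have hs2 : s^2 = 1 - u^2 := Real.sq_sqrt hu02
    set Φ2 : ℂ := (↑(b*u) : ℂ) + (↑(b*s) : ℂ) * Complex.I with hΦ2def
    have hnum2 : Complex.normSq Φ2 = b^2 := by
      simp only [hΦ2def, Complex.normSq_apply, Complex.add_re, Complex.add_im,
        Complex.ofReal_re, Complex.ofReal_im, Complex.mul_re, Complex.mul_im,
        Complex.I_re, Complex.I_im]
      ring_nf
      linear_combination b^2 * hs2
    have habs2 : ‖Φ2‖ = b := by
      rw [Complex.norm_def, hnum2, Real.sqrt_sq hb0.le]
    have hmain : pseudoHyp (↑a) Φ2 = c := by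
      have hnden : Complex.normSq (1 - (starRingEnd ℂ) Φ2 * (↑a : ℂ))
          = 1 + a^2*b^2 - 2*a*b*u := by
        simp only [hΦ2def, Complex.normSq_apply, map_add, map_mul, Complex.conj_I,
          Complex.conj_ofReal, Complex.sub_re, Complex.sub_im, Complex.one_re,
          Complex.one_im, Complex.add_re, Complex.add_im, Complex.mul_re, Complex.mul_im,
          Complex.ofReal_re, Complex.ofReal_im, Complex.I_re, Complex.I_im,
          Complex.neg_re, Complex.neg_im]
        ring_nf
        linear_combination a^2 * b^2 * hs2
      have hnnum : Complex.normSq ((↑a : ℂ) - Φ2) = a^2 + b^2 - 2*a*b*u := by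
        simp only [hΦ2def, Complex.normSq_apply, Complex.sub_re, Complex.sub_im,
          Complex.add_re, Complex.add_im, Complex.mul_re, Complex.mul_im,
          Complex.ofReal_re, Complex.ofReal_im, Complex.I_re, Complex.I_im]
        ring_nf
        linear_combination b^2 * hs2
      have hkey : a^2 + b^2 - 2*a*b*u = c^2 * (1 + a^2*b^2 - 2*a*b*u) := by
        linear_combination hu
      have hdpos : 0 < 1 + a^2*b^2 - 2*a*b*u := by
        have hab0 : 0 < a*b := mul_pos ha0 hb0
        linarith [mul_pos (by linarith : (0:ℝ) < 1 - a*b) (by linarith : (0:ℝ) < 1 - a*b),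
          mul_nonneg (by linarith : (0:ℝ) ≤ 1-u) (by linarith : (0:ℝ) ≤ 2*(a*b))]
      have hdne : (1 - (starRingEnd ℂ) Φ2 * (↑a : ℂ)) ≠ 0 := by
        intro h
        rw [h, Complex.normSq_zero] at hnden
        linarith
      rw [pseudoHyp, norm_div, div_eq_iff (norm_ne_zero_iff.mpr hdne)]
      rw [Complex.norm_def, Complex.norm_def, hnnum, hnden, hkey,
        Real.sqrt_mul (sq_nonneg c), Real.sqrt_sq hc0.le]
    refine ⟨![(↑a : ℂ), 0, Φ2], ?_, ?_⟩
    · intro i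
      fin_cases i
      · show ‖(↑a : ℂ)‖ < 1
        rw [Complex.norm_real, Real.norm_eq_abs, abs_of_pos ha0]; exact ha1
      · show ‖(0 : ℂ)‖ < 1
        simp
      · show ‖Φ2‖ < 1
        rw [habs2]; exact hb1
    · have h01 : pseudoHyp (↑a : ℂ) 0 = a := by
        simp [pseudoHyp, Complex.norm_real, abs_of_pos ha0]
      have h12 : pseudoHyp (0 : ℂ) Φ2 = b := by
        rw [pseudoHyp]
        simp [habs2]
      intro i j
      fin_cases i <;> fin_cases j
      · show pseudoHyp (↑a : ℂ) (↑a : ℂ) = δ 0 0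
        rw [pseudoHyp_self]; exact (hzero 0).symm
      · show pseudoHyp (↑a : ℂ) 0 = δ 0 1
        exact h01
      · show pseudoHyp (↑a : ℂ) Φ2 = δ 0 2
        exact hmain
      · show pseudoHyp (0 : ℂ) (↑a : ℂ) = δ 1 0
        rw [pseudoHyp_comm, h01]; exact hsymm 0 1
      · show pseudoHyp (0 : ℂ) (0 : ℂ) = δ 1 1
        rw [pseudoHyp_self]; exact (hzero 1).symm
      · show pseudoHyp (0 : ℂ) Φ2 = δ 1 2
        exact h12
      · show pseudoHyp Φ2 (↑a : ℂ) = δ 2 0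
        rw [pseudoHyp_comm, hmain]; exact hsymm 0 2
      · show pseudoHyp Φ2 (0 : ℂ) = δ 2 1
        rw [pseudoHyp_comm, h12]; exact hsymm 1 2
      · show pseudoHyp Φ2 Φ2 = δ 2 2
        rw [pseudoHyp_self]; exact (hzero 2).symm
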